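/- Let D be an essential domain admitting an essential representation {D_p : p ∈ Y} such that the set Y of centers is closed in Spec(D) with respect to the constructible topology. Then D is a Prüfer v-multiplication domain. -/

import Mathlib

open scoped nonZeroDivisors

/-- The localization of `R` at the prime `p`, viewed inside a field `K` to which `R` maps. -/
def locg {R K : Type*} [CommRing R] [Field K] [Algebra R K] (p : PrimeSpectrum R) :
    Subring K where
  carrier := {x : K | ∃ a b : R, b ∉ p.asIdeal ∧ x * algebraMap R K b = algebraMap R K a}
  zero_mem' := ⟨0, 1, fun h => p.2.ne_top ((Ideal.eq_top_iff_one _).2 h), by simp⟩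
  one_mem' := ⟨1, 1, fun h => p.2.ne_top ((Ideal.eq_top_iff_one _).2 h), by simp⟩
  add_mem' := by
    rintro x y ⟨a₁, b₁, hb₁, e₁⟩ ⟨a₂, b₂, hb₂, e₂⟩
    exact ⟨a₁ * b₂ + a₂ * b₁, b₁ * b₂,
      fun h => ((p.2.mem_or_mem h).elim hb₁ hb₂), by
        rw [map_add, map_mul, map_mul, map_mul]
        linear_combination (algebraMap R K b₂) * e₁ + (algebraMap R K b₁) * e₂⟩
  mul_mem' := by
    rintro x y ⟨a₁, b₁, hb₁, e₁⟩ ⟨a₂, b₂, hb₂, e₂⟩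
    exact ⟨a₁ * a₂, b₁ * b₂,
      fun h => ((p.2.mem_or_mem h).elim hb₁ hb₂), by
        rw [map_mul, map_mul, show x * y * (algebraMap R K b₁ * algebraMap R K b₂)
          = (x * algebraMap R K b₁) * (y * algebraMap R K b₂) by ring, e₁, e₂]⟩
  neg_mem' := by
    rintro x ⟨a, b, hb, e⟩
    exact ⟨-a, b, hb, by rw [map_neg, neg_mul, e]⟩
/-- `I` is a `t`-ideal: its `t`-closure is contained in (hence equal to) `I`. -/
def IsTIdeal (R : Type*) [CommRing R] [IsDomain R] (I : Ideal R) : Prop :=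
  ∀ x : R, (∃ J : Ideal R, J.FG ∧ J ≤ I ∧
    algebraMap R (FractionRing R) x ∈
      (1 / (1 / (J : FractionalIdeal R⁰ (FractionRing R))))) → x ∈ I

/-- `M` is a `t`-maximal ideal: maximal among proper `t`-ideals. -/
def IsTMax (R : Type*) [CommRing R] [IsDomain R] (M : Ideal R) : Prop :=
  IsTIdeal R M ∧ M ≠ ⊤ ∧ ∀ I : Ideal R, IsTIdeal R I → I ≠ ⊤ → M ≤ I → I = M
/-- `R` is a Prüfer `v`-multiplication domain: the localization at every `t`-maximal
ideal is a valuation domain. -/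
def IsPvMD (R : Type*) [CommRing R] [IsDomain R] : Prop :=
  ∀ M : Ideal R, IsTMax R M → ∀ hM : M.IsPrime,
    ValuationRing (locg (K := FractionRing R) ⟨M, hM⟩)
/-- The essential prime spectrum: the primes at which the localization is a valuation
domain. -/
def EssSpec (R : Type*) [CommRing R] [IsDomain R] : Set (PrimeSpectrum R) :=
  {p : PrimeSpectrum R | ValuationRing (locg (K := FractionRing R) p)}

/-- `{D_p : p ∈ Y}` is an essential representation of `R`: each localization is a
valuation domain, and their intersection (inside the quotient field) is `R`. -/
def IsEssentialRep (R : Type*) [CommRing R] [IsDomain R] (Y : Set (PrimeSpectrum R)) : Prop :=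
  (∀ p ∈ Y, ValuationRing (locg (K := FractionRing R) p)) ∧
    (⨅ p ∈ Y, locg (K := FractionRing R) p) = (algebraMap R (FractionRing R)).range

/-- `R` is an essential domain. -/
def IsEssential (R : Type*) [CommRing R] [IsDomain R] : Prop :=
  ∃ Y : Set (PrimeSpectrum R), IsEssentialRep R Y
/-- The constructible (patch) topology on the prime spectrum: the coarsest topology in
which every basic open `D(f)` is clopen. -/
def constructibleTop (A : Type*) [CommRing A] : TopologicalSpace (PrimeSpectrum A) :=
  TopologicalSpace.generateFrom
    {s | (∃ f : A, s = {p : PrimeSpectrum A | f ∉ p.asIdeal}) ∨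
      (∃ f : A, s = {p : PrimeSpectrum A | f ∈ p.asIdeal})}


section Aux

variable {R : Type*} [CommRing R] [IsDomain R]

/-- A subring of a field in which, for every element of the field, either it or its
inverse belongs to the subring, is a valuation ring. -/
lemma valuationRing_of_mem_or_inv_mem {K : Type*} [Field K] (S : Subring K)
    (h : ∀ x : K, x ∈ S ∨ x⁻¹ ∈ S) : ValuationRing S := by
  have h' : ∀ a b : S, ∃ c : S, a * c = b ∨ b * c = a := ?_
  · haveI : PreValuationRing S := ⟨h'⟩
    exact ⟨⟩
  intro a b
  rcases eq_or_ne (b : K) 0 with hb | hb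
  · exact ⟨0, Or.inl (Subtype.ext (by push_cast; simp [hb]))⟩
  rcases h ((a : K) * (b : K)⁻¹) with hx | hx
  · refine ⟨⟨_, hx⟩, Or.inr (Subtype.ext ?_)⟩
    push_cast
    field_simp
  · rcases eq_or_ne (a : K) 0 with ha | ha
    · exact ⟨0, Or.inr (Subtype.ext (by push_cast; simp [ha]))⟩
    · refine ⟨⟨_, hx⟩, Or.inl (Subtype.ext ?_)⟩
      push_cast
      rw [mul_inv, inv_inv]
      field_simp

lemma one_not_mem_primeSpectrum (p : PrimeSpectrum R) : (1 : R) ∉ p.asIdeal :=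
  fun h => p.2.ne_top ((Ideal.eq_top_iff_one _).2 h)

lemma algebraMap_mem_locg (p : PrimeSpectrum R) (a : R) :
    algebraMap R (FractionRing R) a ∈ locg (K := FractionRing R) p :=
  ⟨a, 1, one_not_mem_primeSpectrum p, by simp⟩

/-- If the localization at `p` is a valuation ring then for every element of the fraction
field, either it or its inverse lies in that localization. -/
lemma mem_or_inv_mem_locg (p : PrimeSpectrum R)
    (h : ValuationRing (locg (K := FractionRing R) p)) (x : FractionRing R) :
    x ∈ locg (K := FractionRing R) p ∨ x⁻¹ ∈ locg (K := FractionRing R) p := by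
  obtain ⟨⟨a, b⟩, hx⟩ := IsLocalization.surj R⁰ x
  have hb0 : algebraMap R (FractionRing R) (b : R) ≠ 0 := by
    simpa using nonZeroDivisors.ne_zero b.2
  obtain ⟨c, hc | hc⟩ := @PreValuationRing.cond _ _ h.toPreValuationRing
    (⟨_, algebraMap_mem_locg p a⟩ : locg (K := FractionRing R) p)
    ⟨_, algebraMap_mem_locg p (b : R)⟩
  · -- ā * c = b̄
    have hc' : algebraMap R (FractionRing R) a * (c : FractionRing R)
        = algebraMap R (FractionRing R) (b : R) := congrArg Subtype.val hc
    rcases eq_or_ne (algebraMap R (FractionRing R) a) 0 with ha | ha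
    · left
      have hx0 : x = 0 := by
        have h2 : x * algebraMap R (FractionRing R) (b : R) = 0 := by rw [hx, ha]
        rcases mul_eq_zero.1 h2 with h' | h'
        · exact h'
        · exact absurd h' hb0
      rw [hx0]
      exact (locg (K := FractionRing R) p).zero_mem
    · right
      have hxc : x * (c : FractionRing R) = 1 := by
        have h2 : algebraMap R (FractionRing R) a * (x * (c : FractionRing R))
            = algebraMap R (FractionRing R) a * 1 := by
          rw [mul_one]
          calc algebraMap R (FractionRing R) a * (x * (c : FractionRing R))
              = x * (algebraMap R (FractionRing R) a * (c : FractionRing R)) := by ring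
            _ = x * algebraMap R (FractionRing R) (b : R) := by rw [hc']
            _ = algebraMap R (FractionRing R) a := hx
        exact mul_left_cancel₀ ha h2
      rw [inv_eq_of_mul_eq_one_right hxc]
      exact c.2
  · -- b̄ * c = ā
    left
    have hc' : algebraMap R (FractionRing R) (b : R) * (c : FractionRing R)
        = algebraMap R (FractionRing R) a := congrArg Subtype.val hc
    have hxx : x = (c : FractionRing R) := by
      have h2 : algebraMap R (FractionRing R) (b : R) * x
          = algebraMap R (FractionRing R) (b : R) * (c : FractionRing R) := by
        rw [hc', ← hx]; ring
      exact mul_left_cancel₀ hb0 h2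
    rw [hxx]
    exact c.2

lemma locg_mono {K : Type*} [Field K] [Algebra R K] {p q : PrimeSpectrum R}
    (h : p.asIdeal ≤ q.asIdeal) : locg (K := K) q ≤ locg (K := K) p := by
  rintro x ⟨a, b, hb, e⟩
  exact ⟨a, b, fun hbm => hb (h hbm), e⟩

lemma genOpen_mem_ultrafilter {X : Type*} (g : Set (Set X)) (U : Ultrafilter X) (q : X)
    (hq : ∀ s ∈ g, q ∈ s → s ∈ U) {O : Set X} (hO : TopologicalSpace.GenerateOpen g O) :
    q ∈ O → O ∈ U := by
  induction hO with
  | basic s hs => exact hq s hs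
  | univ => exact fun _ => Filter.univ_mem
  | inter s t _ _ ihs iht => exact fun h => Filter.inter_mem (ihs h.1) (iht h.2)
  | sUnion S _ ih =>
      rintro ⟨t, htS, hqt⟩
      exact Filter.mem_of_superset (ih t htS hqt) (Set.subset_sUnion_of_mem htS)

/-- The patch-compactness argument: if every finitely generated subideal of `M` is
contained in some member of the patch-closed set `Y`, then so is `M` itself. -/
lemma exists_mem_le_of_forall_fg (Y : Set (PrimeSpectrum R))
    (hcl : @IsClosed _ (constructibleTop R) Y) (M : Ideal R)
    (h : ∀ J : Ideal R, J.FG → J ≤ M → ∃ p ∈ Y, J ≤ p.asIdeal) :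
    ∃ p ∈ Y, M ≤ p.asIdeal := by
  classical
  set S : {T : Finset R // (T : Set R) ⊆ M} → Set (PrimeSpectrum R) :=
    fun T => {p | p ∈ Y ∧ ∀ f ∈ T.1, f ∈ p.asIdeal} with hS
  have hne : ∀ T, (S T).Nonempty := by
    rintro ⟨T, hT⟩
    obtain ⟨p, hpY, hp⟩ := h (Ideal.span T) (Submodule.fg_span T.finite_toSet)
      (Ideal.span_le.2 hT)
    exact ⟨p, hpY, fun f hf => hp (Ideal.subset_span hf)⟩
  haveI : Nonempty (PrimeSpectrum R) := ⟨(hne ⟨∅, by simp⟩).choose⟩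
  have hdir : Directed (· ≥ ·) (fun T => Filter.principal (S T)) := by
    rintro ⟨T₁, h₁⟩ ⟨T₂, h₂⟩
    refine ⟨⟨T₁ ∪ T₂, by rw [Finset.coe_union]; exact Set.union_subset h₁ h₂⟩,
      Filter.principal_mono.2 ?_, Filter.principal_mono.2 ?_⟩ <;>
    · rintro p ⟨hpY, hp⟩
      exact ⟨hpY, fun f hf => hp f (by simp [hf])⟩
  haveI hFne : (⨅ T, Filter.principal (S T)).NeBot :=
    Filter.iInf_neBot_of_directed hdir (fun T => Filter.principal_neBot_iff.2 (hne T))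
  set U := Ultrafilter.of (⨅ T, Filter.principal (S T)) with hU
  have hSU : ∀ T, S T ∈ U := fun T =>
    (Ultrafilter.of_le _) (Filter.mem_iInf_of_mem T (Filter.mem_principal_self _))
  have hYU : Y ∈ U := Filter.mem_of_superset (hSU ⟨∅, by simp⟩) (fun p hp => hp.1)
  set q : Ideal R :=
    { carrier := {f | {p : PrimeSpectrum R | f ∈ p.asIdeal} ∈ U}
      add_mem' := fun {a b} ha hb => Filter.mem_of_superset (Filter.inter_mem ha hb)
        (fun p hp => Ideal.add_mem _ hp.1 hp.2)
      zero_mem' := Filter.mem_of_superset Filter.univ_mem (fun p _ => Ideal.zero_mem _)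
      smul_mem' := fun c x hx => Filter.mem_of_superset hx
        (fun p hp => Ideal.mul_mem_left _ c hp) } with hq
  have hqprime : q.IsPrime := by
    constructor
    · intro h1
      have h1' : {p : PrimeSpectrum R | (1 : R) ∈ p.asIdeal} ∈ U :=
        (Ideal.eq_top_iff_one q).1 h1
      have : (∅ : Set (PrimeSpectrum R)) ∈ U := by
        convert h1' using 1
        ext p
        simp [one_not_mem_primeSpectrum p]
      exact (Ultrafilter.neBot U).ne (Filter.empty_mem_iff_bot.1 this)
    · intro a b hab
      have : {p : PrimeSpectrum R | a ∈ p.asIdeal} ∪ {p | b ∈ p.asIdeal} ∈ U :=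
        Filter.mem_of_superset hab (fun p hp => p.2.mem_or_mem hp)
      exact Ultrafilter.union_mem_iff.1 this
  have hqY : (⟨q, hqprime⟩ : PrimeSpectrum R) ∈ Y := by
    by_contra hnot
    have hYc : Yᶜ ∈ U := by
      refine genOpen_mem_ultrafilter _ U ⟨q, hqprime⟩ ?_ hcl.isOpen_compl hnot
      rintro s (⟨f, rfl⟩ | ⟨f, rfl⟩) hqs
      · exact Ultrafilter.compl_mem_iff_notMem.2 hqs
      · exact hqs
    exact (Ultrafilter.compl_mem_iff_notMem.1 hYc) hYU
  refine ⟨_, hqY, fun f hf => ?_⟩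
  exact Filter.mem_of_superset (hSU ⟨{f}, by simpa using hf⟩)
    (fun p hp => hp.2 f (Finset.mem_singleton_self f))

end Aux

theorem isPvMD_of_essentialRep_isClosed {R : Type*} [CommRing R] [IsDomain R]
    (Y : Set (PrimeSpectrum R)) (hrep : IsEssentialRep R Y)
    (hcl : @IsClosed _ (constructibleTop R) Y) :
    IsPvMD R := by
  intro M hM hMp
  by_cases hbot : M = ⊥
  · refine valuationRing_of_mem_or_inv_mem _ (fun x => Or.inl ?_)
    obtain ⟨⟨a, b⟩, hx⟩ := IsLocalization.surj R⁰ x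
    refine ⟨a, b, ?_, hx⟩
    intro hb
    have hb' : (b : R) ∈ M := hb
    rw [hbot] at hb'
    exact nonZeroDivisors.ne_zero b.2 ((Submodule.mem_bot R).1 hb')
  · obtain ⟨f, hfM, hf0⟩ := Submodule.exists_mem_ne_zero_of_ne_bot hbot
    have hex : ∃ p ∈ Y, M ≤ p.asIdeal := by
      refine exists_mem_le_of_forall_fg Y hcl M (fun J hJfg hJM => ?_)
      by_contra hno
      push_neg at hno
      set J' : Ideal R := J ⊔ Ideal.span {f} with hJ'
      have hJ'fg : J'.FG := Submodule.FG.sup hJfg (Submodule.fg_span (Set.finite_singleton f))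
      have hJ'M : J' ≤ M := sup_le hJM (Ideal.span_le.2 (by simpa using hfM))
      have hJ'0 : J' ≠ ⊥ := by
        intro h0
        exact hf0 ((Submodule.eq_bot_iff _).1 h0 f
          (le_sup_right (α := Ideal R) (Ideal.subset_span rfl)))
      have hJ'coe : (J' : FractionalIdeal R⁰ (FractionRing R)) ≠ 0 := by
        simpa [FractionalIdeal.coeIdeal_eq_zero] using hJ'0
      have hdiv : ∀ x ∈ (1 / (J' : FractionalIdeal R⁰ (FractionRing R))),
          x ∈ (1 : FractionalIdeal R⁰ (FractionRing R)) := by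
        intro x hx
        rw [FractionalIdeal.mem_div_iff_of_ne_zero hJ'coe] at hx
        rw [FractionalIdeal.mem_one_iff R⁰]
        have hxR : x ∈ (algebraMap R (FractionRing R)).range := by
          rw [← hrep.2]
          simp only [Subring.mem_iInf]
          intro p hp
          obtain ⟨g, hgJ, hgp⟩ := SetLike.not_le_iff_exists.1 (hno p hp)
          have hg : algebraMap R (FractionRing R) g
              ∈ (J' : FractionalIdeal R⁰ (FractionRing R)) :=
            (FractionalIdeal.mem_coeIdeal _).2 ⟨g, Ideal.mem_sup_left hgJ, rfl⟩
          obtain ⟨a, ha⟩ := (FractionalIdeal.mem_one_iff R⁰).1 (hx _ hg)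
          exact ⟨a, g, hgp, ha.symm⟩
        obtain ⟨a, ha⟩ := hxR
        exact ⟨a, ha⟩
      have hd0 : (1 / (J' : FractionalIdeal R⁰ (FractionRing R))) ≠ 0 := by
        intro h0
        have h1 : (1 : FractionRing R) ∈ 1 / (J' : FractionalIdeal R⁰ (FractionRing R)) := by
          rw [FractionalIdeal.mem_div_iff_of_ne_zero hJ'coe]
          intro y hy
          obtain ⟨a, _, ha⟩ := (FractionalIdeal.mem_coeIdeal _).1 hy
          rw [one_mul]
          exact (FractionalIdeal.mem_one_iff R⁰).2 ⟨a, ha⟩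
        rw [h0] at h1
        exact one_ne_zero ((FractionalIdeal.mem_zero_iff _).1 h1)
      have h1 : (1 : FractionRing R)
          ∈ 1 / (1 / (J' : FractionalIdeal R⁰ (FractionRing R))) := by
        rw [FractionalIdeal.mem_div_iff_of_ne_zero hd0]
        intro y hy
        rw [one_mul]
        exact hdiv y hy
      have h1M : (1 : R) ∈ M := hM.1 1 ⟨J', hJ'fg, hJ'M, by rw [map_one]; exact h1⟩
      exact hM.2.1 ((Ideal.eq_top_iff_one M).2 h1M)
    obtain ⟨p, hpY, hMle⟩ := hex
    refine valuationRing_of_mem_or_inv_mem _ (fun x => ?_)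
    rcases mem_or_inv_mem_locg p (hrep.1 p hpY) x with hx | hx
    · exact Or.inl (locg_mono hMle hx)
    · exact Or.inr (locg_mono hMle hx)
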